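/- arXiv:1912.12293 — 4 statements merged into one kernel-verified Lean document; each statement's English description precedes it below -/
import Mathlib

section
/- Let P(λ) = [[A(λ), B(λ)], [-C(λ), D(λ)]] be a polynomial system matrix with A(λ) regular of size n×n and transfer function G(λ) = D(λ) + C(λ)A(λ)^{-1}B(λ). If the columns of the stacked polynomial matrix [H_1(λ); H_2(λ)] form a basis (over F(λ)) of the right null-space of P(λ) consisting of vector polynomials, then H_2(λ) is a right polynomial basis of G(λ) and H_1(λ) = -A(λ)^{-1}B(λ)H_2(λ). -/
open Polynomial Matrix

noncomputable section

variable {F : Type*} [Field F]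

/-- The natural embedding of a polynomial matrix into the rational functions. -/
def toRF {a b : Type*} (M : Matrix a b (Polynomial F)) : Matrix a b (RatFunc F) :=
  M.map (algebraMap (Polynomial F) (RatFunc F))

/-- The columns of the polynomial matrix `N`, regarded as rational vectors, form a basis of
the right null-space of the rational matrix `M`. -/
def IsRightPolyBasis {a b : Type*} [Fintype a] [Fintype b] {l : ℕ}
    (M : Matrix a b (RatFunc F)) (N : Matrix b (Fin l) (Polynomial F)) : Prop :=
  LinearIndependent (RatFunc F) (fun j : Fin l => (toRF N)ᵀ j) ∧
    Submodule.span (RatFunc F) (Set.range fun j : Fin l => (toRF N)ᵀ j) =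
      LinearMap.ker M.mulVecLin

/-- If the columns of the stacked polynomial matrix `[H₁; H₂]` form a basis
of the right null-space of the polynomial system matrix `P = [[A,B],[-C,D]]`, then `H₂` is a
right polynomial basis of the transfer function `G = D + C A⁻¹ B` and
`H₁ = -A⁻¹ B H₂`. -/
theorem rightPolyBasis_of_polynomialSystemMatrix
    {n p m l : ℕ}
    (A : Matrix (Fin n) (Fin n) (Polynomial F))
    (B : Matrix (Fin n) (Fin m) (Polynomial F))
    (C : Matrix (Fin p) (Fin n) (Polynomial F))
    (D : Matrix (Fin p) (Fin m) (Polynomial F))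
    (hA : A.det ≠ 0)
    (G : Matrix (Fin p) (Fin m) (RatFunc F))
    (hG : G = toRF D + toRF C * (toRF A)⁻¹ * toRF B)
    (P : Matrix (Fin n ⊕ Fin p) (Fin n ⊕ Fin m) (RatFunc F))
    (hP : P = toRF (Matrix.fromBlocks A B (-C) D))
    (H₁ : Matrix (Fin n) (Fin l) (Polynomial F))
    (H₂ : Matrix (Fin m) (Fin l) (Polynomial F))
    (hbasis : IsRightPolyBasis P (Matrix.fromRows H₁ H₂)) :
    IsRightPolyBasis G H₂ ∧
      toRF H₁ = -((toRF A)⁻¹ * toRF B * toRF H₂) := by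
  set A' : Matrix (Fin n) (Fin n) (RatFunc F) := toRF A with hA'def
  set B' : Matrix (Fin n) (Fin m) (RatFunc F) := toRF B with hB'def
  set C' : Matrix (Fin p) (Fin n) (RatFunc F) := toRF C with hC'def
  set D' : Matrix (Fin p) (Fin m) (RatFunc F) := toRF D with hD'def
  -- A' is invertible
  have hA'det : A'.det ≠ 0 := by
    have h : A'.det = algebraMap (Polynomial F) (RatFunc F) A.det :=
      (RingHom.map_det (algebraMap (Polynomial F) (RatFunc F)) A).symm
    rw [h]
    intro h'
    exact hA ((map_eq_zero_iff _ (IsFractionRing.injective (Polynomial F) (RatFunc F))).mp h')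
  have hA'u : IsUnit A'.det := isUnit_iff_ne_zero.mpr hA'det
  set M : Matrix (Fin n) (Fin m) (RatFunc F) := A'⁻¹ * B' with hMdef
  -- P as blocks of rational matrices
  have hPblocks : P = Matrix.fromBlocks A' B' (-C') D' := by
    rw [hP]
    ext i j
    cases i <;> cases j <;>
      simp [toRF, hA'def, hB'def, hC'def, hD'def, Matrix.map_apply, map_neg]
  -- G applied to vectors of the special shape
  have hGy : ∀ y : Fin m → RatFunc F,
      G.mulVec y = (-C').mulVec (-(M.mulVec y)) + D'.mulVec y := by
    intro y
    rw [Matrix.neg_mulVec, Matrix.mulVec_neg, neg_neg, Matrix.mulVec_mulVec, hMdef,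
      ← Matrix.mul_assoc, hG, Matrix.add_mulVec, add_comm]
  -- key characterization of the kernel of P
  have key : ∀ v : Fin n ⊕ Fin m → RatFunc F,
      P.mulVec v = 0 ↔
        (v ∘ Sum.inl = -(M.mulVec (v ∘ Sum.inr)) ∧ G.mulVec (v ∘ Sum.inr) = 0) := by
    intro v
    set x := v ∘ Sum.inl with hx
    set y := v ∘ Sum.inr with hy
    have hmul : P.mulVec v =
        Sum.elim (A'.mulVec x + B'.mulVec y) ((-C').mulVec x + D'.mulVec y) := by
      rw [hPblocks]
      exact Matrix.fromBlocks_mulVec A' B' (-C') D' v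
    constructor
    · intro h
      rw [hmul] at h
      have h1 : A'.mulVec x + B'.mulVec y = 0 := by
        funext i; exact congrFun h (Sum.inl i)
      have h2 : (-C').mulVec x + D'.mulVec y = 0 := by
        funext i; exact congrFun h (Sum.inr i)
      have hx' : x = -(M.mulVec y) := by
        have h3 := congrArg (A'⁻¹.mulVec) h1
        rw [Matrix.mulVec_add, Matrix.mulVec_mulVec, Matrix.mulVec_mulVec,
          Matrix.nonsing_inv_mul A' hA'u, Matrix.one_mulVec, Matrix.mulVec_zero] at h3
        rw [hMdef]
        exact eq_neg_of_add_eq_zero_left h3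
      refine ⟨hx', ?_⟩
      rw [hGy y, ← hx']
      exact h2
    · rintro ⟨hx', hy'⟩
      rw [hmul]
      have e1 : A'.mulVec x + B'.mulVec y = 0 := by
        rw [hx', Matrix.mulVec_neg, Matrix.mulVec_mulVec, hMdef, ← Matrix.mul_assoc,
          Matrix.mul_nonsing_inv A' hA'u, Matrix.one_mul]
        simp
      have e2 : (-C').mulVec x + D'.mulVec y = 0 := by
        rw [hx', ← hGy y]
        exact hy'
      rw [e1, e2]
      funext i; cases i <;> rfl
  -- the stacked column family
  set v : Fin l → (Fin n ⊕ Fin m → RatFunc F) :=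
    fun j => (toRF (Matrix.fromRows H₁ H₂))ᵀ j with hvdef
  have hspan : Submodule.span (RatFunc F) (Set.range v) = LinearMap.ker P.mulVecLin :=
    hbasis.2
  have hli0 : LinearIndependent (RatFunc F) v := hbasis.1
  have hvinl : ∀ j, v j ∘ Sum.inl = (toRF H₁)ᵀ j := by
    intro j; funext i; simp [hvdef, toRF, Matrix.fromRows_apply_inl]
  have hvinr : ∀ j, v j ∘ Sum.inr = (toRF H₂)ᵀ j := by
    intro j; funext i; simp [hvdef, toRF, Matrix.fromRows_apply_inr]
  have hvker : ∀ j, P.mulVec (v j) = 0 := by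
    intro j
    have hmem : v j ∈ Submodule.span (RatFunc F) (Set.range v) :=
      Submodule.subset_span (Set.mem_range_self j)
    rw [hspan] at hmem
    simpa [Matrix.mulVecLin_apply] using hmem
  have hvchar : ∀ j, (v j ∘ Sum.inl = -(M.mulVec (v j ∘ Sum.inr)) ∧
      G.mulVec (v j ∘ Sum.inr) = 0) := fun j => (key (v j)).mp (hvker j)
  -- second conclusion
  have hH₁ : toRF H₁ = -((toRF A)⁻¹ * toRF B * toRF H₂) := by
    ext i j
    have h1 := congrFun ((hvchar j).1) i
    rw [hvinl j, hvinr j] at h1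
    have h2 : (M.mulVec ((toRF H₂)ᵀ j)) i = (M * toRF H₂) i j := by
      simp [Matrix.mulVec, Matrix.mul_apply, dotProduct]
    simp only [Matrix.transpose_apply, Pi.neg_apply] at h1
    rw [h1, h2]
    simp [hMdef, Matrix.mul_assoc, hA'def, hB'def]
  refine ⟨?_, hH₁⟩
  -- projection and section
  set π : (Fin n ⊕ Fin m → RatFunc F) →ₗ[RatFunc F] (Fin m → RatFunc F) :=
    LinearMap.funLeft (RatFunc F) (RatFunc F) Sum.inr with hπdef
  have hπapply : ∀ w : Fin n ⊕ Fin m → RatFunc F, π w = w ∘ Sum.inr := fun _ => rfl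
  set σ : (Fin m → RatFunc F) →ₗ[RatFunc F] (Fin n ⊕ Fin m → RatFunc F) :=
    (LinearEquiv.sumArrowLequivProdArrow (Fin n) (Fin m) (RatFunc F)
        (RatFunc F)).symm.toLinearMap ∘ₗ
      LinearMap.prod (-M).mulVecLin LinearMap.id with hσdef
  have hσinl : ∀ y, σ y ∘ Sum.inl = -(M.mulVec y) := by
    intro y; funext i
    show ((-M).mulVec y) i = (-(M.mulVec y)) i
    rw [Matrix.neg_mulVec]
  have hσinr : ∀ y : Fin m → RatFunc F, σ y ∘ Sum.inr = y := fun _ => rfl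
  have hπσ : ∀ y, π (σ y) = y := fun _ => rfl
  -- kernel of P intersects the kernel of π trivially
  have hdisj : Disjoint (LinearMap.ker P.mulVecLin) (LinearMap.ker π) := by
    rw [Submodule.disjoint_def]
    intro w hw hw'
    rw [LinearMap.mem_ker] at hw hw'
    rw [Matrix.mulVecLin_apply] at hw
    have hinr : w ∘ Sum.inr = 0 := hw'
    have hchar := (key w).mp hw
    have hinl : w ∘ Sum.inl = 0 := by
      rw [hchar.1, hinr, Matrix.mulVec_zero, neg_zero]
    funext i
    cases i with
    | inl i => exact congrFun hinl i
    | inr i => exact congrFun hinr i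
  -- linear independence
  have h3 : (⇑π ∘ v) = fun j : Fin l => (toRF H₂)ᵀ j := by
    funext j
    rw [Function.comp_apply, hπapply, hvinr]
  have hli : LinearIndependent (RatFunc F) (fun j : Fin l => (toRF H₂)ᵀ j) := by
    have h2 := hli0.map (f := π) (by rw [hspan]; exact hdisj)
    rwa [h3] at h2
  refine ⟨hli, ?_⟩
  -- span equals kernel of G
  have hrange : (Set.range fun j : Fin l => (toRF H₂)ᵀ j) = ⇑π '' (Set.range v) := by
    rw [← h3, Set.range_comp]
  rw [hrange, Submodule.span_image, hspan]
  ext y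
  simp only [Submodule.mem_map, LinearMap.mem_ker, Matrix.mulVecLin_apply]
  constructor
  · rintro ⟨w, hw, rfl⟩
    have hchar := (key w).mp hw
    rw [hπapply]
    exact hchar.2
  · intro hy
    refine ⟨σ y, ?_, hπσ y⟩
    rw [key (σ y), hσinl, hσinr]
    exact ⟨rfl, hy⟩

end
end

section
/- Let P(λ) = [[A(λ), B(λ)], [-C(λ), D(λ)]] be a polynomial system matrix (A(λ) regular, n×n) with transfer function G(λ). Assume A(λ) and C(λ) are right coprime. If H_2(λ) is a right polynomial basis of G(λ) and H_1(λ) := -A(λ)^{-1}B(λ)H_2(λ), then H_1(λ) is a polynomial matrix and the columns of [H_1(λ); H_2(λ)] form a right polynomial basis of P(λ). -/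
open Polynomial Matrix

noncomputable section

variable {F : Type*} [Field F]

lemma toRF_mul' {a b c : Type*} [Fintype b] (M : Matrix a b (Polynomial F))
    (N : Matrix b c (Polynomial F)) : toRF (M * N) = toRF M * toRF N :=
  Matrix.map_mul

lemma toRF_sub' {a b : Type*} (M N : Matrix a b (Polynomial F)) :
    toRF (M - N) = toRF M - toRF N := by
  ext i j
  simp [toRF, Matrix.map_apply, Matrix.sub_apply, map_sub]

lemma toRF_add2 {a b : Type*} (M N : Matrix a b (Polynomial F)) :
    toRF (M + N) = toRF M + toRF N := by
  ext i j
  simp [toRF, Matrix.map_apply, Matrix.add_apply, map_add]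

lemma col_mul' {a b c : Type*} [Fintype b] (M : Matrix a b (RatFunc F))
    (N : Matrix b c (RatFunc F)) (j : c) : (M * N)ᵀ j = M.mulVec (Nᵀ j) := by
  funext i
  simp [Matrix.mul_apply, Matrix.mulVec, dotProduct, Matrix.transpose_apply]

set_option maxHeartbeats 2000000 in
set_option synthInstance.maxHeartbeats 1000000 in
/-- Let `P = [[A,B],[-C,D]]` be a polynomial system matrix with transfer
function `G`, and suppose `A` and `C` are right coprime (Bezout identity). If `H₂` is a right
polynomial basis of `G` and `H₁ := -A⁻¹ B H₂`, then `H₁` is a polynomial matrix and the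
columns of `[H₁; H₂]` form a right polynomial basis of `P`. -/
theorem rightPolyBasis_of_transferFunction
    {n p m l : ℕ}
    (A : Matrix (Fin n) (Fin n) (Polynomial F))
    (B : Matrix (Fin n) (Fin m) (Polynomial F))
    (C : Matrix (Fin p) (Fin n) (Polynomial F))
    (D : Matrix (Fin p) (Fin m) (Polynomial F))
    (hA : A.det ≠ 0)
    (hcoprime : ∃ (X : Matrix (Fin n) (Fin n) (Polynomial F))
        (Y : Matrix (Fin n) (Fin p) (Polynomial F)), X * A + Y * C = 1)
    (G : Matrix (Fin p) (Fin m) (RatFunc F))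
    (hG : G = toRF D + toRF C * (toRF A)⁻¹ * toRF B)
    (P : Matrix (Fin n ⊕ Fin p) (Fin n ⊕ Fin m) (RatFunc F))
    (hP : P = toRF (Matrix.fromBlocks A B (-C) D))
    (H₂ : Matrix (Fin m) (Fin l) (Polynomial F))
    (hH₂ : IsRightPolyBasis G H₂) :
    ∃ H₁ : Matrix (Fin n) (Fin l) (Polynomial F),
      toRF H₁ = -((toRF A)⁻¹ * toRF B * toRF H₂) ∧
      IsRightPolyBasis P (Matrix.fromRows H₁ H₂) := by
  classical
  obtain ⟨X, Y, hXY⟩ := hcoprime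
  set A' := toRF A with hA'
  set B' := toRF B with hB'
  set C' := toRF C with hC'
  set D' := toRF D with hD'
  set H₂' := toRF H₂ with hH₂'
  -- invertibility of A'
  have hdet : A'.det ≠ 0 := by
    rw [hA', toRF,
      show A.map ⇑(algebraMap (Polynomial F) (RatFunc F)) =
        (algebraMap (Polynomial F) (RatFunc F)).mapMatrix A from rfl,
      ← RingHom.map_det]
    intro h
    exact hA (IsFractionRing.injective (Polynomial F) (RatFunc F) (by simpa using h))
  have hunit : IsUnit A'.det := isUnit_iff_ne_zero.mpr hdet
  have hAAinv : A' * A'⁻¹ = 1 := Matrix.mul_nonsing_inv _ hunit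
  have hAinvA : A'⁻¹ * A' = 1 := Matrix.nonsing_inv_mul _ hunit
  -- columns of H₂ are in the kernel of G
  have hcolker : ∀ j : Fin l, G.mulVec (H₂'ᵀ j) = 0 := by
    intro j
    have hmem : (H₂'ᵀ j) ∈ LinearMap.ker G.mulVecLin := by
      rw [← hH₂.2]
      exact Submodule.subset_span ⟨j, rfl⟩
    simpa [Matrix.mulVecLin_apply] using hmem
  have hGH : G * H₂' = 0 := by
    ext i j
    have := congrFun (hcolker j) i
    simpa [Matrix.mul_apply, Matrix.mulVec, dotProduct] using this
  set W := B' * H₂' with hW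
  set V := A'⁻¹ * W with hV
  -- key relation: C' * V = -(D' * H₂')
  have hCV : C' * V = -(D' * H₂') := by
    have h0 : D' * H₂' + C' * V = 0 := by
      have h1 := hGH
      rw [hG, Matrix.add_mul] at h1
      calc D' * H₂' + C' * V
          = D' * H₂' + C' * A'⁻¹ * B' * H₂' := by
            rw [hV, hW, Matrix.mul_assoc (C' * A'⁻¹) B' H₂', Matrix.mul_assoc C' A'⁻¹ _]
        _ = 0 := h1
    have := eq_neg_of_add_eq_zero_right h0
    rw [this]
  -- Bezout over RatFunc
  have hX1 : toRF X * A' + toRF Y * C' = 1 := by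
    rw [hA', hC', ← toRF_mul', ← toRF_mul',
      ← toRF_add2, hXY]
    ext i j
    simp [toRF, Matrix.map_apply, Matrix.one_apply, apply_ite]
  have hAV : A' * V = W := by
    rw [hV, ← Matrix.mul_assoc, hAAinv, Matrix.one_mul]
  have hid : toRF X * W + toRF Y * (C' * V) = V := by
    have h1 : (toRF X * A' + toRF Y * C') * V = V := by rw [hX1, Matrix.one_mul]
    rw [Matrix.add_mul, Matrix.mul_assoc, Matrix.mul_assoc, hAV] at h1
    exact h1
  have hid' : toRF X * W - toRF Y * (D' * H₂') = V := by
    rw [← hid, hCV, Matrix.mul_neg]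
    abel
  -- H₁
  set H₁ := Y * D * H₂ - X * B * H₂ with hH₁
  have hkey : toRF H₁ = -((toRF A)⁻¹ * toRF B * toRF H₂) := by
    rw [hH₁, toRF_sub', toRF_mul', toRF_mul', toRF_mul', toRF_mul',
      Matrix.mul_assoc A'⁻¹ B' H₂', ← hW, ← hV, ← hD', ← hB', ← hH₂', ← hid']
    rw [Matrix.mul_assoc (toRF Y) D' H₂', Matrix.mul_assoc (toRF X) B' H₂', ← hW]
    abel
  have hcol1 : ∀ j : Fin l, (toRF H₁)ᵀ j = -((A'⁻¹ * B').mulVec (H₂'ᵀ j)) := by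
    intro j
    rw [hkey, ← col_mul']
    funext i
    simp only [Matrix.transpose_apply, Matrix.neg_apply, Pi.neg_apply]
    rfl
  have hAH1 : A' * toRF H₁ = -(B' * H₂') := by
    rw [hkey, Matrix.mul_neg, ← Matrix.mul_assoc, ← Matrix.mul_assoc, hAAinv, Matrix.one_mul]
  have hCH1 : C' * toRF H₁ = D' * H₂' := by
    rw [hkey, Matrix.mul_neg, Matrix.mul_assoc A'⁻¹ B' H₂', ← hW, ← hV, hCV, neg_neg]
  have hPblocks : P = Matrix.fromBlocks A' B' (-C') D' := by
    rw [hP]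
    ext i j
    cases i <;> cases j <;>
      simp [hA', hB', hC', hD', toRF, Matrix.map_apply, Matrix.fromBlocks, Matrix.neg_apply,
        map_neg, Matrix.of_apply, Sum.elim_inl, Sum.elim_inr]
  have hPmul : ∀ v : Fin n ⊕ Fin m → RatFunc F, P.mulVec v =
      Sum.elim (A'.mulVec (v ∘ Sum.inl) + B'.mulVec (v ∘ Sum.inr))
        ((-C').mulVec (v ∘ Sum.inl) + D'.mulVec (v ∘ Sum.inr)) := by
    intro v
    rw [hPblocks]
    exact Matrix.fromBlocks_mulVec _ _ _ _ v
  have hNinl : ∀ j : Fin l,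
      ((toRF (Matrix.fromRows H₁ H₂))ᵀ j) ∘ Sum.inl = (toRF H₁)ᵀ j := fun _ => rfl
  have hNinr : ∀ j : Fin l,
      ((toRF (Matrix.fromRows H₁ H₂))ᵀ j) ∘ Sum.inr = H₂'ᵀ j := fun _ => rfl
  have htop : ∀ j : Fin l, A'.mulVec ((toRF H₁)ᵀ j) + B'.mulVec (H₂'ᵀ j) = 0 := by
    intro j
    rw [← col_mul', ← col_mul', hAH1]
    have hnt : (-(B' * H₂'))ᵀ j = -((B' * H₂')ᵀ j) := by
      funext i; simp only [Matrix.transpose_apply, Matrix.neg_apply, Pi.neg_apply]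
    rw [hnt]
    exact neg_add_cancel _
  have hbot : ∀ j : Fin l, (-C').mulVec ((toRF H₁)ᵀ j) + D'.mulVec (H₂'ᵀ j) = 0 := by
    intro j
    rw [Matrix.neg_mulVec, ← col_mul', ← col_mul', hCH1]
    exact neg_add_cancel _
  refine ⟨H₁, hkey, ?_, ?_⟩
  · -- linear independence
    apply LinearIndependent.of_comp (LinearMap.funLeft (RatFunc F) (RatFunc F) Sum.inr)
    have heq : (⇑(LinearMap.funLeft (RatFunc F) (RatFunc F) Sum.inr) ∘
        fun j : Fin l => (toRF (Matrix.fromRows H₁ H₂))ᵀ j) = fun j : Fin l => H₂'ᵀ j := by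
      funext j
      exact hNinr j
    rw [heq]
    exact hH₂.1
  · -- span = kernel
    apply le_antisymm
    · rw [Submodule.span_le]
      rintro x ⟨j, rfl⟩
      rw [SetLike.mem_coe, LinearMap.mem_ker, Matrix.mulVecLin_apply, hPmul,
        hNinl j, hNinr j, htop j, hbot j]
      funext i; cases i <;> rfl
    · intro v hv
      rw [LinearMap.mem_ker, Matrix.mulVecLin_apply, hPmul] at hv
      have hv1 : A'.mulVec (v ∘ Sum.inl) + B'.mulVec (v ∘ Sum.inr) = 0 := by
        funext i; exact congrFun hv (Sum.inl i)
      have hv2 : (-C').mulVec (v ∘ Sum.inl) + D'.mulVec (v ∘ Sum.inr) = 0 := by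
        funext i; exact congrFun hv (Sum.inr i)
      have hV1 : v ∘ Sum.inl = -((A'⁻¹ * B').mulVec (v ∘ Sum.inr)) := by
        have h1 : A'.mulVec (v ∘ Sum.inl) = -(B'.mulVec (v ∘ Sum.inr)) :=
          eq_neg_of_add_eq_zero_left hv1
        have h2 : (A'⁻¹ * A').mulVec (v ∘ Sum.inl)
            = A'⁻¹.mulVec (-(B'.mulVec (v ∘ Sum.inr))) := by
          rw [← Matrix.mulVec_mulVec, h1]
        rw [hAinvA, Matrix.one_mulVec] at h2
        rw [h2, Matrix.mulVec_neg, Matrix.mulVec_mulVec]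
      have h4 : D'.mulVec (v ∘ Sum.inr) = C'.mulVec (v ∘ Sum.inl) := by
        have h := hv2
        rw [Matrix.neg_mulVec, neg_add_eq_zero] at h
        exact h.symm
      have hGv : G.mulVec (v ∘ Sum.inr) = 0 := by
        have h3 : (C' * A'⁻¹ * B').mulVec (v ∘ Sum.inr)
            = C'.mulVec ((A'⁻¹ * B').mulVec (v ∘ Sum.inr)) := by
          rw [Matrix.mulVec_mulVec, Matrix.mul_assoc]
        have h5 : (A'⁻¹ * B').mulVec (v ∘ Sum.inr) = -(v ∘ Sum.inl) := by
          rw [hV1, neg_neg]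
        rw [hG, Matrix.add_mulVec, h3, h5, Matrix.mulVec_neg, ← h4]
        exact add_neg_cancel _
      have hmem2 : v ∘ Sum.inr ∈
          Submodule.span (RatFunc F) (Set.range fun j : Fin l => H₂'ᵀ j) := by
        rw [hH₂.2, LinearMap.mem_ker, Matrix.mulVecLin_apply]
        exact hGv
      obtain ⟨c, hc⟩ := (Submodule.mem_span_range_iff_exists_fun (RatFunc F)).mp hmem2
      have hlin : (A'⁻¹ * B').mulVec (∑ j, c j • H₂'ᵀ j)
          = ∑ j, c j • (A'⁻¹ * B').mulVec (H₂'ᵀ j) := by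
        have h := map_sum ((A'⁻¹ * B').mulVecLin) (fun j => c j • H₂'ᵀ j) Finset.univ
        simp only [Matrix.mulVecLin_apply, LinearMap.map_smul] at h
        exact h
      have hsum1 : ∑ j, c j • (toRF H₁)ᵀ j = v ∘ Sum.inl := by
        rw [hV1, ← hc, hlin, ← Finset.sum_neg_distrib]
        exact Finset.sum_congr rfl fun j _ => by rw [hcol1 j, smul_neg]
      have hvsum : v = ∑ j, c j • (toRF (Matrix.fromRows H₁ H₂))ᵀ j := by
        funext i
        cases i with
        | inl a =>
          have := congrFun hsum1 a
          simp only [Finset.sum_apply, Pi.smul_apply, Function.comp_apply] at this ⊢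
          rw [← this]
          rfl
        | inr b =>
          have := congrFun hc b
          simp only [Finset.sum_apply, Pi.smul_apply, Function.comp_apply] at this ⊢
          rw [← this]
          rfl
      rw [hvsum]
      exact Submodule.sum_smul_mem _ c fun j _ => Submodule.subset_span ⟨j, rfl⟩

end
end

section
/- The columns of a polynomial matrix N(λ) ∈ F[λ]^{m×l} form a minimal basis of the subspace of F(λ)^m they span if and only if N(λ_0) has full column rank for all λ_0 in the algebraic closure of F and N(λ) is column reduced (its highest column degree coefficient matrix has full column rank l). -/
open Polynomial Matrix

noncomputable section

variable {F : Type*} [Field F]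

/-- Degree (as a natural number) of the `j`-th column of a polynomial matrix. -/
def colDegNat {a : Type*} [Fintype a] {l : ℕ} (N : Matrix a (Fin l) (Polynomial F))
    (j : Fin l) : ℕ :=
  Finset.univ.sup fun i => (N i j).natDegree

/-- The order of a polynomial matrix: the sum of its column degrees. -/
def matOrder {a : Type*} [Fintype a] {l : ℕ} (N : Matrix a (Fin l) (Polynomial F)) : ℕ :=
  ∑ j, colDegNat N j

/-- The span over `F(λ)` of the columns of a polynomial matrix. -/
def spanCols {a : Type*} {l : ℕ} (N : Matrix a (Fin l) (Polynomial F)) :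
    Submodule (RatFunc F) (a → RatFunc F) :=
  Submodule.span (RatFunc F) (Set.range fun j : Fin l => (toRF N)ᵀ j)

/-- `N` is a minimal basis of the subspace `V`: its columns are linearly independent vector
polynomials spanning `V`, of least order among all such polynomial bases of `V`. -/
def IsMinimalBasisOf {a : Type*} [Fintype a] {l : ℕ}
    (V : Submodule (RatFunc F) (a → RatFunc F)) (N : Matrix a (Fin l) (Polynomial F)) : Prop :=
  LinearIndependent (RatFunc F) (fun j : Fin l => (toRF N)ᵀ j) ∧ spanCols N = V ∧
    ∀ (l' : ℕ) (N' : Matrix a (Fin l') (Polynomial F)),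
      LinearIndependent (RatFunc F) (fun j : Fin l' => (toRF N')ᵀ j) → spanCols N' = V →
        matOrder N ≤ matOrder N'

/-- The highest column degree coefficient matrix of a polynomial matrix. -/
def highestColCoeff {a : Type*} [Fintype a] {l : ℕ} (N : Matrix a (Fin l) (Polynomial F)) :
    Matrix a (Fin l) F :=
  Matrix.of fun i j => (N i j).coeff (colDegNat N j)

-- ### auxiliary lemmas

set_option maxHeartbeats 1000000
set_option synthInstance.maxHeartbeats 400000

lemma rank_eq_iff_li {K : Type*} [Field K] {m l : ℕ} (M : Matrix (Fin m) (Fin l) K) :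
    M.rank = l ↔ LinearIndependent K (fun j : Fin l => Mᵀ j) := by
  rw [Matrix.rank_eq_finrank_span_cols, linearIndependent_iff_card_eq_finrank_span,
    Fintype.card_fin, eq_comm]
  rfl

lemma toRF_apply {a b : Type*} (M : Matrix a b (Polynomial F)) (i : a) (j : b) :
    toRF M i j = algebraMap (Polynomial F) (RatFunc F) (M i j) := rfl

lemma algebraMap_polynomial_injective :
    Function.Injective (algebraMap (Polynomial F) (RatFunc F)) :=
  IsFractionRing.injective _ _

lemma sum_smul_col {m l : ℕ} (N : Matrix (Fin m) (Fin l) (Polynomial F))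
    (c : Fin l → RatFunc F) (i : Fin m) :
    (∑ j, c j • (toRF N)ᵀ j) i = ∑ j, c j * algebraMap (Polynomial F) (RatFunc F) (N i j) := by
  rw [Finset.sum_apply]
  congr 1

lemma algebraMap_mulVec {m l : ℕ} (N : Matrix (Fin m) (Fin l) (Polynomial F))
    (p : Fin l → Polynomial F) (i : Fin m) :
    algebraMap (Polynomial F) (RatFunc F) ((N *ᵥ p) i) =
      ∑ j, algebraMap (Polynomial F) (RatFunc F) (p j) *
        algebraMap (Polynomial F) (RatFunc F) (N i j) := by
  simp only [Matrix.mulVec, dotProduct, map_sum, _root_.map_mul]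
  exact Finset.sum_congr rfl fun j _ => mul_comm _ _

/-- Linear independence of columns over `F(λ)` in terms of polynomial relations. -/
lemma li_iff_poly {m l : ℕ} (N : Matrix (Fin m) (Fin l) (Polynomial F)) :
    LinearIndependent (RatFunc F) (fun j : Fin l => (toRF N)ᵀ j) ↔
      ∀ p : Fin l → Polynomial F, N *ᵥ p = 0 → p = 0 := by
  rw [Fintype.linearIndependent_iff]
  constructor
  · intro h p hp
    funext j
    have hsum : ∑ j, (algebraMap (Polynomial F) (RatFunc F) (p j)) • (toRF N)ᵀ j = 0 := by
      funext i
      rw [sum_smul_col]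
      have h0 : (N *ᵥ p) i = 0 := by rw [hp]; rfl
      rw [show (∑ j, algebraMap (Polynomial F) (RatFunc F) (p j) *
          algebraMap (Polynomial F) (RatFunc F) (N i j)) =
          algebraMap (Polynomial F) (RatFunc F) ((N *ᵥ p) i) from (algebraMap_mulVec N p i).symm,
        h0, map_zero]
      rfl
    have := h (fun j => algebraMap (Polynomial F) (RatFunc F) (p j)) hsum j
    exact algebraMap_polynomial_injective (by simpa using this)
  · intro h c hc j
    obtain ⟨b, hb⟩ := IsLocalization.exist_integer_multiples
      (nonZeroDivisors (Polynomial F)) Finset.univ c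
    choose p hp using fun j => hb j (Finset.mem_univ j)
    have hb0 : algebraMap (Polynomial F) (RatFunc F) (b : Polynomial F) ≠ 0 := by
      intro h0
      exact nonZeroDivisors.ne_zero b.2 (algebraMap_polynomial_injective (by simpa using h0))
    have hp0 : p = 0 := by
      apply h
      funext i
      apply algebraMap_polynomial_injective
      have hci : ∑ j, c j * algebraMap (Polynomial F) (RatFunc F) (N i j) = 0 := by
        rw [← sum_smul_col, hc]; rfl
      rw [algebraMap_mulVec, Pi.zero_apply, map_zero]
      calc ∑ j, algebraMap (Polynomial F) (RatFunc F) (p j) *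
            algebraMap (Polynomial F) (RatFunc F) (N i j)
          = algebraMap (Polynomial F) (RatFunc F) (b : Polynomial F) *
            ∑ j, c j * algebraMap (Polynomial F) (RatFunc F) (N i j) := by
            rw [Finset.mul_sum]
            refine Finset.sum_congr rfl fun j _ => ?_
            rw [hp j, Algebra.smul_def]; ring
        _ = 0 := by rw [hci, mul_zero]
    have hz : (b : Polynomial F) • c j = 0 := by
      rw [← hp j, hp0]; simp
    rw [Algebra.smul_def] at hz
    exact (mul_eq_zero.mp hz).resolve_left hb0

-- ### Chunk 2: predictable degree property

lemma li_cols_iff_mulVec {K : Type*} [Field K] {m l : ℕ} (M : Matrix (Fin m) (Fin l) K) :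
    LinearIndependent K (fun j : Fin l => Mᵀ j) ↔
      ∀ c : Fin l → K, M *ᵥ c = 0 → c = 0 := by
  rw [Fintype.linearIndependent_iff]
  have key : ∀ c : Fin l → K, (∑ j, c j • Mᵀ j) = M *ᵥ c := by
    intro c
    funext i
    rw [Finset.sum_apply]
    simp only [Pi.smul_apply, Matrix.transpose_apply, smul_eq_mul, Matrix.mulVec,
      dotProduct]
    exact Finset.sum_congr rfl fun j _ => mul_comm _ _
  constructor
  · intro h c hc
    funext j
    exact h c (by rw [key, hc]) j
  · intro h c hc j
    have := h c (by rw [← key, hc])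
    rw [this]; rfl

lemma coeff_mul_of_le {R : Type*} [CommSemiring R] {u v : R[X]} {a b : ℕ}
    (hu : u.natDegree ≤ a) (hv : v.natDegree ≤ b) :
    (u * v).coeff (a + b) = u.coeff a * v.coeff b := by
  rcases lt_or_eq_of_le hu with hu' | hu'
  · rw [Polynomial.coeff_eq_zero_of_natDegree_lt hu', zero_mul,
      Polynomial.coeff_eq_zero_of_natDegree_lt]
    calc (u * v).natDegree ≤ u.natDegree + v.natDegree := Polynomial.natDegree_mul_le
      _ < a + b := by omega
  rcases lt_or_eq_of_le hv with hv' | hv'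
  · rw [Polynomial.coeff_eq_zero_of_natDegree_lt hv', mul_zero,
      Polynomial.coeff_eq_zero_of_natDegree_lt]
    calc (u * v).natDegree ≤ u.natDegree + v.natDegree := Polynomial.natDegree_mul_le
      _ < a + b := by omega
  subst hu' hv'
  exact Polynomial.coeff_mul_degree_add_degree u v

attribute [local instance] Classical.propDecidable

lemma natDegree_entry_le {m l : ℕ} (N : Matrix (Fin m) (Fin l) (Polynomial F))
    (i : Fin m) (j : Fin l) : (N i j).natDegree ≤ colDegNat N j := by
  have h : (N i j).natDegree ≤ Finset.univ.sup fun i' => (N i' j).natDegree :=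
    Finset.le_sup (f := fun i' => (N i' j).natDegree) (Finset.mem_univ i)
  exact h

/-- The coefficient of `(N *ᵥ p) i` at the top expected degree. -/
lemma coeff_mulVec_top {m l : ℕ} (N : Matrix (Fin m) (Fin l) (Polynomial F))
    (p : Fin l → Polynomial F) (Dm : ℕ)
    (hD : ∀ j, p j ≠ 0 → (p j).natDegree + colDegNat N j ≤ Dm) (i : Fin m) :
    ((N *ᵥ p) i).coeff Dm = (highestColCoeff N *ᵥ fun j =>
      if (p j).natDegree + colDegNat N j = Dm ∧ p j ≠ 0 then (p j).leadingCoeff else 0) i := by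
  simp only [Matrix.mulVec, dotProduct, Polynomial.finset_sum_coeff]
  refine Finset.sum_congr rfl fun j _ => ?_
  by_cases hpj : p j = 0
  · simp [hpj]
  by_cases hd : (p j).natDegree + colDegNat N j = Dm
  · rw [if_pos ⟨hd, hpj⟩]
    have : (N i j * p j).coeff Dm = (N i j).coeff (colDegNat N j) * (p j).coeff (p j).natDegree := by
      rw [← hd, add_comm ((p j).natDegree)]
      exact coeff_mul_of_le (natDegree_entry_le N i j) le_rfl
    rw [this]
    rfl
  · rw [if_neg (by tauto)]
    rw [mul_zero, Polynomial.coeff_eq_zero_of_natDegree_lt]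
    have h1 : (p j).natDegree + colDegNat N j < Dm := lt_of_le_of_ne (hD j hpj) hd
    calc (N i j * p j).natDegree ≤ (N i j).natDegree + (p j).natDegree :=
          Polynomial.natDegree_mul_le
      _ ≤ colDegNat N j + (p j).natDegree := by
          have := natDegree_entry_le N i j; omega
      _ < Dm := by omega

lemma natDegree_mulVec_le {m l : ℕ} (N : Matrix (Fin m) (Fin l) (Polynomial F))
    (p : Fin l → Polynomial F) (Dm : ℕ)
    (hD : ∀ j, p j ≠ 0 → (p j).natDegree + colDegNat N j ≤ Dm) (i : Fin m) :
    ((N *ᵥ p) i).natDegree ≤ Dm := by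
  simp only [Matrix.mulVec, dotProduct]
  refine le_trans (Polynomial.natDegree_sum_le _ _) ?_
  rw [Finset.fold_max_le]
  refine ⟨Nat.zero_le _, fun j _ => ?_⟩
  by_cases hpj : p j = 0
  · simp [hpj]
  · calc (Function.comp natDegree fun j => N i j * p j) j
        ≤ (N i j).natDegree + (p j).natDegree := Polynomial.natDegree_mul_le
      _ ≤ colDegNat N j + (p j).natDegree := by have := natDegree_entry_le N i j; omega
      _ ≤ Dm := by have := hD j hpj; omega

/-- Under column-reducedness, a nonzero polynomial combination of the columns has the
predictable top coefficient nonzero somewhere. -/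
lemma exists_top_coeff_ne {m l : ℕ} {N : Matrix (Fin m) (Fin l) (Polynomial F)}
    (hNh : ∀ c : Fin l → F, highestColCoeff N *ᵥ c = 0 → c = 0)
    {p : Fin l → Polynomial F} (hp : p ≠ 0) :
    ∃ j0, p j0 ≠ 0 ∧
      (∀ j, p j ≠ 0 → (p j).natDegree + colDegNat N j ≤ (p j0).natDegree + colDegNat N j0) ∧
      ∃ i, ((N *ᵥ p) i).coeff ((p j0).natDegree + colDegNat N j0) ≠ 0 := by
  have hne : (Finset.univ.filter fun j => p j ≠ 0).Nonempty := by
    rcases Function.ne_iff.mp hp with ⟨j, hj⟩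
    exact ⟨j, by simpa using hj⟩
  obtain ⟨j0, hj0mem, hj0max⟩ := Finset.exists_max_image _
    (fun j => (p j).natDegree + colDegNat N j) hne
  have hj0 : p j0 ≠ 0 := (Finset.mem_filter.mp hj0mem).2
  set Dm := (p j0).natDegree + colDegNat N j0 with hDm
  have hD : ∀ j, p j ≠ 0 → (p j).natDegree + colDegNat N j ≤ Dm := fun j hj =>
    hj0max j (Finset.mem_filter.mpr ⟨Finset.mem_univ j, hj⟩)
  refine ⟨j0, hj0, hD, ?_⟩
  set c : Fin l → F := fun j =>
    if (p j).natDegree + colDegNat N j = Dm ∧ p j ≠ 0 then (p j).leadingCoeff else 0 with hc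
  have hcne : c ≠ 0 := by
    intro h0
    have : c j0 = 0 := by rw [h0]; rfl
    rw [hc] at this
    simp only [hDm, hj0, not_false_iff, and_true, if_pos rfl, if_true, true_and,
      ne_eq, if_pos trivial] at this
    exact hj0 (Polynomial.leadingCoeff_eq_zero.mp this)
  by_contra hcon
  push_neg at hcon
  apply hcne
  apply hNh
  funext i
  rw [← coeff_mulVec_top N p Dm hD i, hcon i]; rfl

-- ### Chunk 3: column replacement machinery

section Update

variable {K : Type*} [Field K] {M : Type*} [AddCommGroup M] [Module K M]
variable {ι : Type*} [Fintype ι] [DecidableEq ι]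

lemma sum_update_eq (v : ι → M) (t : M) (j0 : ι) (a : ι → K) :
    ∑ k, a k • Function.update v j0 t k
      = (∑ k, ((if k = j0 then 0 else a k)) • v k) + a j0 • t := by
  have h1 : ∀ k, a k • Function.update v j0 t k
      = Function.update (fun k => a k • v k) j0 (a j0 • t) k := by
    intro k
    by_cases hk : k = j0
    · subst hk; simp
    · rw [Function.update_of_ne hk, Function.update_of_ne hk]
  have h2 : ∀ k, (if k = j0 then (0:K) else a k) • v k
      = Function.update (fun k => a k • v k) j0 (0:M) k := by
    intro k
    by_cases hk : k = j0
    · subst hk; simp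
    · rw [if_neg hk, Function.update_of_ne hk]
  rw [Finset.sum_congr rfl fun k _ => h1 k, Finset.sum_congr rfl fun k _ => h2 k,
    Finset.sum_update_of_mem (Finset.mem_univ j0), Finset.sum_update_of_mem (Finset.mem_univ j0)]
  rw [zero_add, add_comm]

lemma li_update {v : ι → M} (hv : LinearIndependent K v) (s : ι → K) (j0 : ι)
    (hs : s j0 ≠ 0) :
    LinearIndependent K (Function.update v j0 (∑ j, s j • v j)) := by
  rw [Fintype.linearIndependent_iff] at hv ⊢
  intro a ha k
  rw [sum_update_eq] at ha
  have ha2 : ∑ k, ((if k = j0 then 0 else a k) + a j0 * s k) • v k = 0 := by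
    rw [← ha]
    have hexp : a j0 • (∑ j, s j • v j) = ∑ k, (a j0 * s k) • v k := by
      rw [Finset.smul_sum]
      exact Finset.sum_congr rfl fun k _ => smul_smul _ _ _
    rw [hexp, ← Finset.sum_add_distrib]
    exact Finset.sum_congr rfl fun k _ => add_smul _ _ _
  have hall := fun k => hv _ ha2 k
  have hj0 : a j0 = 0 := by
    have := hall j0
    rw [if_pos rfl, zero_add] at this
    exact (mul_eq_zero.mp this).resolve_right hs
  by_cases hk : k = j0
  · rw [hk]; exact hj0
  · have := hall k
    rw [if_neg hk, hj0, zero_mul, add_zero] at this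
    exact this

lemma span_update (v : ι → M) (s : ι → K) (j0 : ι) (hs : s j0 ≠ 0) :
    Submodule.span K (Set.range (Function.update v j0 (∑ j, s j • v j)))
      = Submodule.span K (Set.range v) := by
  set t := ∑ j, s j • v j with ht
  apply le_antisymm
  · rw [Submodule.span_le]
    rintro x ⟨k, rfl⟩
    by_cases hk : k = j0
    · rw [hk, Function.update_self]
      exact Submodule.sum_mem _ fun j _ =>
        Submodule.smul_mem _ _ (Submodule.subset_span ⟨j, rfl⟩)
    · rw [Function.update_of_ne hk]
      exact Submodule.subset_span ⟨k, rfl⟩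
  · rw [Submodule.span_le]
    rintro x ⟨k, rfl⟩
    by_cases hk : k = j0
    · have hvk : v k ∈ Submodule.span K (Set.range (Function.update v j0 t)) := by
        have hexp : v j0 = (s j0)⁻¹ • (t - ∑ j ∈ Finset.univ.erase j0, s j • v j) := by
          rw [ht, ← Finset.sum_erase_add _ _ (Finset.mem_univ j0)]
          rw [add_sub_cancel_left]
          rw [smul_smul, inv_mul_cancel₀ hs, one_smul]
        rw [hk, hexp]
        apply Submodule.smul_mem
        apply Submodule.sub_mem
        · exact Submodule.subset_span ⟨j0, by rw [Function.update_self]⟩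
        · refine Submodule.sum_mem _ fun j hj => Submodule.smul_mem _ _ ?_
          exact Submodule.subset_span
            ⟨j, by rw [Function.update_of_ne (Finset.ne_of_mem_erase hj)]⟩
      exact hvk
    · exact Submodule.subset_span ⟨k, by rw [Function.update_of_ne hk]⟩

end Update

/-- Transposed columns of an updated matrix. -/
lemma cols_updateColumn {m l : ℕ} (N : Matrix (Fin m) (Fin l) (Polynomial F))
    (j0 : Fin l) (u : Fin m → Polynomial F) :
    (fun k : Fin l => (toRF (N.updateCol j0 u))ᵀ k)
      = Function.update (fun j : Fin l => (toRF N)ᵀ j) j0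
          (fun i => algebraMap (Polynomial F) (RatFunc F) (u i)) := by
  funext k
  by_cases hk : k = j0
  · subst hk
    rw [Function.update_self]
    funext i
    simp [toRF, Matrix.updateCol_apply]
  · rw [Function.update_of_ne hk]
    funext i
    simp [toRF, Matrix.updateCol_apply, hk]

lemma colDegNat_updateColumn_ne {m l : ℕ} (N : Matrix (Fin m) (Fin l) (Polynomial F))
    (j0 : Fin l) (u : Fin m → Polynomial F) {k : Fin l} (hk : k ≠ j0) :
    colDegNat (N.updateCol j0 u) k = colDegNat N k := by
  unfold colDegNat
  refine Finset.sup_congr rfl fun i _ => ?_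
  rw [Matrix.updateCol_apply, if_neg hk]

lemma colDegNat_updateColumn_self {m l : ℕ} (N : Matrix (Fin m) (Fin l) (Polynomial F))
    (j0 : Fin l) (u : Fin m → Polynomial F) :
    colDegNat (N.updateCol j0 u) j0 = Finset.univ.sup fun i => (u i).natDegree := by
  unfold colDegNat
  refine Finset.sup_congr rfl fun i _ => ?_
  rw [Matrix.updateCol_apply, if_pos rfl]

lemma matOrder_update_lt {m l : ℕ} (N : Matrix (Fin m) (Fin l) (Polynomial F))
    (j0 : Fin l) (u : Fin m → Polynomial F) (hd : 0 < colDegNat N j0)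
    (hu : ∀ i, (u i).natDegree < colDegNat N j0) :
    matOrder (N.updateCol j0 u) < matOrder N := by
  have hself : colDegNat (N.updateCol j0 u) j0 < colDegNat N j0 := by
    rw [colDegNat_updateColumn_self, Finset.sup_lt_iff (by simpa using hd)]
    exact fun i _ => hu i
  unfold matOrder
  refine Finset.sum_lt_sum (fun k _ => ?_) ⟨j0, Finset.mem_univ j0, hself⟩
  by_cases hk : k = j0
  · rw [hk]; exact le_of_lt hself
  · rw [colDegNat_updateColumn_ne N j0 u hk]

-- ### Chunk 4: division property

lemma aeval_mulVec {m l : ℕ} (N : Matrix (Fin m) (Fin l) (Polynomial F))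
    (lam : AlgebraicClosure F) (p : Fin l → Polynomial F) (i : Fin m) :
    Polynomial.aeval lam ((N *ᵥ p) i)
      = ((N.map fun f => Polynomial.aeval lam f) *ᵥ (fun j => Polynomial.aeval lam (p j))) i := by
  simp [Matrix.mulVec, dotProduct, map_sum, _root_.map_mul, Matrix.map_apply]

lemma divide_out {m l : ℕ} {N : Matrix (Fin m) (Fin l) (Polynomial F)}
    (hC : ∀ lam : AlgebraicClosure F, ∀ c : Fin l → AlgebraicClosure F,
      (N.map fun f => Polynomial.aeval lam f) *ᵥ c = 0 → c = 0) :
    ∀ (n : ℕ) (g : Polynomial F), g.natDegree = n → g ≠ 0 →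
      ∀ (v : Fin m → Polynomial F) (p : Fin l → Polynomial F),
        (fun i => g * v i) = N *ᵥ p → ∃ p', v = N *ᵥ p' := by
  intro n
  induction n using Nat.strong_induction_on with
  | _ n IH =>
    intro g hgn hg0 v p heq
    rcases Nat.eq_zero_or_pos n with hn0 | hnpos
    · subst hn0
      have hgC : g = Polynomial.C (g.coeff 0) := Polynomial.eq_C_of_natDegree_eq_zero hgn
      have ha0 : g.coeff 0 ≠ 0 := fun h => hg0 (by rw [hgC, h, _root_.map_zero])
      obtain ⟨a, ha, hgCa⟩ : ∃ a, a ≠ 0 ∧ g = Polynomial.C a := ⟨g.coeff 0, ha0, hgC⟩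
      subst hgCa
      refine ⟨fun j => Polynomial.C a⁻¹ * p j, ?_⟩
      funext i
      have h1 : Polynomial.C a * v i = (N *ᵥ p) i := congrFun heq i
      have h2 : (N *ᵥ fun j => Polynomial.C a⁻¹ * p j) i
          = Polynomial.C a⁻¹ * (N *ᵥ p) i := by
        simp only [Matrix.mulVec, dotProduct, Finset.mul_sum]
        exact Finset.sum_congr rfl fun j _ => by ring
      rw [h2, ← h1, ← mul_assoc, ← _root_.map_mul, inv_mul_cancel₀ ha, _root_.map_one, one_mul]
    · -- g has positive degree: find a root in the algebraic closure
      have hdeg : g.degree ≠ 0 := by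
        intro h
        rw [Polynomial.degree_eq_natDegree hg0] at h
        have h2 : g.natDegree = 0 := by exact_mod_cast h
        omega
      obtain ⟨lam, hlam⟩ := IsAlgClosed.exists_aeval_eq_zero (AlgebraicClosure F) g hdeg
      have hint : IsIntegral F lam := (Algebra.IsAlgebraic.isAlgebraic lam).isIntegral
      -- p vanishes at lam
      have hker : (fun j => Polynomial.aeval lam (p j)) = 0 := by
        apply hC lam
        funext i
        rw [← aeval_mulVec N lam p i, ← congrFun heq i, _root_.map_mul, hlam, zero_mul]
        rfl
      set μ := minpoly F lam with hμ
      have hμ0 : μ ≠ 0 := minpoly.ne_zero hint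
      have hμdeg : 0 < μ.natDegree := minpoly.natDegree_pos hint
      have hμg : μ ∣ g := minpoly.dvd F lam hlam
      have hμp : ∀ j, μ ∣ p j := fun j => minpoly.dvd F lam (congrFun hker j)
      obtain ⟨g', hg'⟩ := hμg
      choose p'' hp'' using hμp
      have hg'0 : g' ≠ 0 := fun h => hg0 (by rw [hg', h, mul_zero])
      have hdeg' : g'.natDegree < n := by
        have : g.natDegree = μ.natDegree + g'.natDegree := by
          rw [hg', Polynomial.natDegree_mul hμ0 hg'0]
        omega
      refine IH g'.natDegree hdeg' g' rfl hg'0 v p'' ?_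
      funext i
      have h1 : g * v i = (N *ᵥ p) i := congrFun heq i
      have h2 : (N *ᵥ p) i = μ * (N *ᵥ p'') i := by
        simp only [Matrix.mulVec, dotProduct, Finset.mul_sum]
        refine Finset.sum_congr rfl fun j _ => ?_
        rw [hp'' j]; ring
      have h3 : μ * (g' * v i) = μ * (N *ᵥ p'') i := by
        rw [← h2, ← h1, hg']; ring
      exact mul_left_cancel₀ hμ0 h3

/-- Any vector polynomial in the rational span of the columns is a polynomial combination. -/
lemma exists_poly_combo {m l : ℕ} {N : Matrix (Fin m) (Fin l) (Polynomial F)}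
    (hC : ∀ lam : AlgebraicClosure F, ∀ c : Fin l → AlgebraicClosure F,
      (N.map fun f => Polynomial.aeval lam f) *ᵥ c = 0 → c = 0)
    (v : Fin m → Polynomial F)
    (hv : (fun i => algebraMap (Polynomial F) (RatFunc F) (v i)) ∈ spanCols N) :
    ∃ p, v = N *ᵥ p := by
  rw [spanCols, Submodule.mem_span_range_iff_exists_fun] at hv
  obtain ⟨c, hc⟩ := hv
  obtain ⟨b, hb⟩ := IsLocalization.exist_integer_multiples
    (nonZeroDivisors (Polynomial F)) Finset.univ c
  choose p hp using fun j => hb j (Finset.mem_univ j)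
  have hb0 : (b : Polynomial F) ≠ 0 := nonZeroDivisors.ne_zero b.2
  apply divide_out hC (b : Polynomial F).natDegree (b : Polynomial F) rfl hb0 v p
  funext i
  apply algebraMap_polynomial_injective
  rw [algebraMap_mulVec]
  have hci : ∑ j, c j * algebraMap (Polynomial F) (RatFunc F) (N i j)
      = algebraMap (Polynomial F) (RatFunc F) (v i) := by
    rw [← sum_smul_col, hc]
  calc algebraMap (Polynomial F) (RatFunc F) ((b : Polynomial F) * v i)
      = algebraMap (Polynomial F) (RatFunc F) (b : Polynomial F) *
        (∑ j, c j * algebraMap (Polynomial F) (RatFunc F) (N i j)) := by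
        rw [_root_.map_mul, hci]
    _ = ∑ j, algebraMap (Polynomial F) (RatFunc F) (p j) *
        algebraMap (Polynomial F) (RatFunc F) (N i j) := by
        rw [Finset.mul_sum]
        refine Finset.sum_congr rfl fun j _ => ?_
        rw [hp j, Algebra.smul_def]; ring

-- ### Chunk 5: minimality from full rank + column reducedness

lemma li_of_colReduced {m l : ℕ} {N : Matrix (Fin m) (Fin l) (Polynomial F)}
    (hNh : ∀ c : Fin l → F, highestColCoeff N *ᵥ c = 0 → c = 0) :
    LinearIndependent (RatFunc F) (fun j : Fin l => (toRF N)ᵀ j) := by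
  rw [li_iff_poly]
  intro p hp
  by_contra hp0
  obtain ⟨j0, -, -, i, hcoeff⟩ := exists_top_coeff_ne hNh hp0
  rw [hp] at hcoeff
  simp at hcoeff

lemma minimality_of_C_D {m l : ℕ} {N : Matrix (Fin m) (Fin l) (Polynomial F)}
    (hC : ∀ lam : AlgebraicClosure F, ∀ c : Fin l → AlgebraicClosure F,
      (N.map fun f => Polynomial.aeval lam f) *ᵥ c = 0 → c = 0)
    (hNh : ∀ c : Fin l → F, highestColCoeff N *ᵥ c = 0 → c = 0) :
    ∀ (l' : ℕ) (N' : Matrix (Fin m) (Fin l') (Polynomial F)),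
      LinearIndependent (RatFunc F) (fun j : Fin l' => (toRF N')ᵀ j) →
        spanCols N' = spanCols N → matOrder N ≤ matOrder N' := by
  have hliN := li_of_colReduced hNh
  intro l' N' hli' hspan'
  -- l' = l
  have hl : l' = l := by
    have e1 : Module.finrank (RatFunc F) (spanCols N') = l' := by
      rw [spanCols, finrank_span_eq_card hli', Fintype.card_fin]
    have e2 : Module.finrank (RatFunc F) (spanCols N) = l := by
      rw [spanCols, finrank_span_eq_card hliN, Fintype.card_fin]
    rw [← e1, ← e2, hspan']
  subst hl
  -- each column of N' is a polynomial combination of columns of N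
  have hP : ∀ k : Fin l', ∃ p : Fin l' → Polynomial F, (fun i => N' i k) = N *ᵥ p := by
    intro k
    apply exists_poly_combo hC
    rw [← hspan']
    exact Submodule.subset_span ⟨k, rfl⟩
  choose P hPk using hP
  set Q : Matrix (Fin l') (Fin l') (Polynomial F) := Matrix.of fun j k => P k j with hQ
  -- det Q ≠ 0
  have hdetQ : Q.det ≠ 0 := by
    intro hdet
    have hdetRF : (toRF Q).det = 0 := by
      rw [toRF, ← RingHom.mapMatrix_apply, ← RingHom.map_det, hdet, map_zero]
    obtain ⟨c, hc0, hcker⟩ := Matrix.exists_mulVec_eq_zero_iff.mpr hdetRF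
    rw [Fintype.linearIndependent_iff] at hli'
    apply hc0
    funext k
    refine hli' c ?_ k
    funext i
    rw [Finset.sum_apply]
    have hcol : ∀ k, (toRF N')ᵀ k i = ∑ j, toRF Q j k * algebraMap (Polynomial F) (RatFunc F) (N i j) := by
      intro k
      have : N' i k = (N *ᵥ P k) i := congrFun (hPk k) i
      calc (toRF N')ᵀ k i = algebraMap (Polynomial F) (RatFunc F) ((N *ᵥ P k) i) := by
            rw [Matrix.transpose_apply, toRF_apply, this]
        _ = ∑ j, toRF Q j k * algebraMap (Polynomial F) (RatFunc F) (N i j) := by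
            rw [algebraMap_mulVec]
            rfl
    calc ∑ k, (c k • (toRF N')ᵀ k) i
        = ∑ k, c k * ∑ j, toRF Q j k * algebraMap (Polynomial F) (RatFunc F) (N i j) := by
          refine Finset.sum_congr rfl fun k _ => ?_
          rw [Pi.smul_apply, smul_eq_mul, hcol k]
      _ = ∑ k, ∑ j, c k * (toRF Q j k * algebraMap (Polynomial F) (RatFunc F) (N i j)) := by
          exact Finset.sum_congr rfl fun k _ => Finset.mul_sum _ _ _
      _ = ∑ j, ∑ k, c k * (toRF Q j k * algebraMap (Polynomial F) (RatFunc F) (N i j)) :=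
          Finset.sum_comm
      _ = ∑ j, ((toRF Q) *ᵥ c) j * algebraMap (Polynomial F) (RatFunc F) (N i j) := by
          refine Finset.sum_congr rfl fun j _ => ?_
          rw [Matrix.mulVec, dotProduct, Finset.sum_mul]
          exact Finset.sum_congr rfl fun k _ => by ring
      _ = 0 := by rw [hcker]; simp
  -- a permutation with nonzero entries
  have hσ : ∃ σ : Equiv.Perm (Fin l'), ∀ k, Q (σ k) k ≠ 0 := by
    by_contra hcon
    push_neg at hcon
    apply hdetQ
    rw [Matrix.det_apply]
    refine Finset.sum_eq_zero fun σ _ => ?_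
    obtain ⟨k, hk⟩ := hcon σ
    have hz : (∏ i, Q (σ i) i) = 0 := Finset.prod_eq_zero (Finset.mem_univ k) hk
    rw [hz, smul_zero]
  obtain ⟨σ, hσ⟩ := hσ
  -- column degrees dominate
  have hdeg : ∀ k, colDegNat N (σ k) ≤ colDegNat N' k := by
    intro k
    have hPk0 : P k ≠ 0 := by
      intro h0
      exact hσ k (by rw [hQ]; simpa using congrFun h0 (σ k))
    obtain ⟨j0, hj0ne, hmax, i, hcoeff⟩ := exists_top_coeff_ne hNh hPk0
    have h1 : (P k j0).natDegree + colDegNat N j0 ≤ (N' i k).natDegree := by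
      have : N' i k = (N *ᵥ P k) i := congrFun (hPk k) i
      rw [this]
      exact Polynomial.le_natDegree_of_ne_zero hcoeff
    have h2 : colDegNat N (σ k) ≤ (P k j0).natDegree + colDegNat N j0 := by
      have := hmax (σ k) (hσ k)
      omega
    have h3 : (N' i k).natDegree ≤ colDegNat N' k := natDegree_entry_le N' i k
    omega
  calc matOrder N = ∑ k, colDegNat N (σ k) :=
        (Equiv.sum_comp σ (colDegNat N)).symm
    _ ≤ ∑ k, colDegNat N' k := Finset.sum_le_sum fun k _ => hdeg k
    _ = matOrder N' := rfl

-- ### Chunk 6: minimal basis implies column reduced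

lemma D_of_min {m l : ℕ} {N : Matrix (Fin m) (Fin l) (Polynomial F)}
    (hli : LinearIndependent (RatFunc F) (fun j : Fin l => (toRF N)ᵀ j))
    (hmin3 : ∀ (l' : ℕ) (N' : Matrix (Fin m) (Fin l') (Polynomial F)),
      LinearIndependent (RatFunc F) (fun j : Fin l' => (toRF N')ᵀ j) →
        spanCols N' = spanCols N → matOrder N ≤ matOrder N') :
    ∀ c : Fin l → F, highestColCoeff N *ᵥ c = 0 → c = 0 := by
  intro c hc
  by_contra hc0
  have hne : (Finset.univ.filter fun j => c j ≠ 0).Nonempty := by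
    rcases Function.ne_iff.mp hc0 with ⟨j, hj⟩
    exact ⟨j, by simpa using hj⟩
  obtain ⟨j0, hj0mem, hj0max⟩ := Finset.exists_max_image _ (colDegNat N) hne
  have hcj0 : c j0 ≠ 0 := (Finset.mem_filter.mp hj0mem).2
  have hdmax : ∀ j, c j ≠ 0 → colDegNat N j ≤ colDegNat N j0 := fun j hj =>
    hj0max j (Finset.mem_filter.mpr ⟨Finset.mem_univ j, hj⟩)
  -- the replacement column
  set u : Fin m → Polynomial F := fun i =>
    ∑ j, Polynomial.C (c j) * (N i j * Polynomial.X ^ (colDegNat N j0 - colDegNat N j)) with hu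
  set s : Fin l → RatFunc F := fun j =>
    algebraMap (Polynomial F) (RatFunc F)
      (Polynomial.C (c j) * Polynomial.X ^ (colDegNat N j0 - colDegNat N j)) with hs
  have hs0 : s j0 ≠ 0 := by
    rw [hs]
    simp only [Nat.sub_self, pow_zero, mul_one]
    intro h
    have h2 : Polynomial.C (c j0) = (0 : Polynomial F) :=
      algebraMap_polynomial_injective (by rw [h, map_zero])
    exact hcj0 (by simpa using h2)
  have hucol : (fun i => algebraMap (Polynomial F) (RatFunc F) (u i))
      = ∑ j, s j • (fun i' => (toRF N)ᵀ j i') := by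
    funext i
    rw [Finset.sum_apply]
    simp only [hu, map_sum]
    refine Finset.sum_congr rfl fun j _ => ?_
    simp only [Pi.smul_apply, smul_eq_mul, hs, _root_.map_mul, Matrix.transpose_apply,
      toRF_apply]
    ring
  -- columns of the updated matrix
  have hcols : (fun k : Fin l => (toRF (N.updateCol j0 u))ᵀ k)
      = Function.update (fun j : Fin l => (toRF N)ᵀ j) j0 (∑ j, s j • (toRF N)ᵀ j) := by
    rw [cols_updateColumn]
    congr 1
  have hliNew : LinearIndependent (RatFunc F)
      (fun k : Fin l => (toRF (N.updateCol j0 u))ᵀ k) := by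
    rw [hcols]; exact li_update hli s j0 hs0
  have hspanNew : spanCols (N.updateCol j0 u) = spanCols N := by
    unfold spanCols
    rw [show (fun k : Fin l => (toRF (N.updateCol j0 u))ᵀ k)
        = Function.update (fun j : Fin l => (toRF N)ᵀ j) j0 (∑ j, s j • (toRF N)ᵀ j) from hcols]
    exact span_update _ s j0 hs0
  -- degree estimates on u
  have hudeg : ∀ i, (u i).natDegree ≤ colDegNat N j0 := by
    intro i
    rw [hu]
    refine le_trans (Polynomial.natDegree_sum_le _ _) ?_
    rw [Finset.fold_max_le]
    refine ⟨Nat.zero_le _, fun j _ => ?_⟩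
    by_cases hcj : c j = 0
    · simp [hcj]
    · have hd : colDegNat N j ≤ colDegNat N j0 := hdmax j hcj
      calc (Function.comp natDegree fun j =>
            Polynomial.C (c j) * (N i j * Polynomial.X ^ (colDegNat N j0 - colDegNat N j))) j
          ≤ (Polynomial.C (c j)).natDegree +
              (N i j * Polynomial.X ^ (colDegNat N j0 - colDegNat N j)).natDegree :=
            Polynomial.natDegree_mul_le
        _ ≤ 0 + ((N i j).natDegree + (colDegNat N j0 - colDegNat N j)) := by
            have h1 := Polynomial.natDegree_mul_le
              (p := N i j) (q := Polynomial.X ^ (colDegNat N j0 - colDegNat N j))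
            rw [Polynomial.natDegree_C]
            rw [Polynomial.natDegree_X_pow] at h1
            omega
        _ ≤ colDegNat N j0 := by
            have := natDegree_entry_le N i j
            omega
  have hucoeff : ∀ i, (u i).coeff (colDegNat N j0) = 0 := by
    intro i
    rw [hu, Polynomial.finset_sum_coeff]
    have hstep : ∀ j, (Polynomial.C (c j) *
        (N i j * Polynomial.X ^ (colDegNat N j0 - colDegNat N j))).coeff (colDegNat N j0)
        = c j * (N i j).coeff (colDegNat N j) := by
      intro j
      rw [Polynomial.coeff_C_mul, Polynomial.coeff_mul_X_pow']
      by_cases hcj : c j = 0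
      · simp [hcj]
      · have hd : colDegNat N j ≤ colDegNat N j0 := hdmax j hcj
        rw [if_pos (by omega)]
        congr 2
        omega
    rw [Finset.sum_congr rfl fun j _ => hstep j]
    have := congrFun hc i
    rw [Pi.zero_apply] at this
    rw [← this]
    simp only [Matrix.mulVec, dotProduct, highestColCoeff, Matrix.of_apply]
    exact Finset.sum_congr rfl fun j _ => mul_comm _ _
  by_cases hd0 : colDegNat N j0 = 0
  · -- then u = 0, contradicting independence
    have hu0 : ∀ i, u i = 0 := by
      intro i
      have h1 : (u i).natDegree ≤ 0 := by rw [← hd0]; exact hudeg i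
      have h2 := Polynomial.eq_C_of_natDegree_le_zero h1
      rw [h2]
      have := hucoeff i
      rw [hd0] at this
      rw [this, map_zero]
    have hzero : ∑ j, s j • (fun j : Fin l => (toRF N)ᵀ j) j = 0 := by
      rw [← hucol]
      funext i
      rw [hu0 i, map_zero]
      rfl
    rw [Fintype.linearIndependent_iff] at hli
    exact hs0 (hli s hzero j0)
  · -- strict drop in order
    have hult : ∀ i, (u i).natDegree < colDegNat N j0 := by
      intro i
      by_cases hui : u i = 0
      · rw [hui, Polynomial.natDegree_zero]; omega
      · rcases lt_or_eq_of_le (hudeg i) with h | h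
        · exact h
        · exfalso
          apply hui
          have : (u i).leadingCoeff = 0 := by
            rw [Polynomial.leadingCoeff, h]; exact hucoeff i
          exact Polynomial.leadingCoeff_eq_zero.mp this
    have hlt := matOrder_update_lt N j0 u (by omega) hult
    have hge := hmin3 l (N.updateCol j0 u) hliNew hspanNew
    omega

-- ### Chunk 7: minimal basis implies full rank everywhere

lemma C_of_min {m l : ℕ} {N : Matrix (Fin m) (Fin l) (Polynomial F)}
    (hli : LinearIndependent (RatFunc F) (fun j : Fin l => (toRF N)ᵀ j))
    (hmin3 : ∀ (l' : ℕ) (N' : Matrix (Fin m) (Fin l') (Polynomial F)),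
      LinearIndependent (RatFunc F) (fun j : Fin l' => (toRF N')ᵀ j) →
        spanCols N' = spanCols N → matOrder N ≤ matOrder N')
    (lam : AlgebraicClosure F) :
    ∀ cbar : Fin l → AlgebraicClosure F,
      (N.map fun f => Polynomial.aeval lam f) *ᵥ cbar = 0 → cbar = 0 := by
  intro cbar hcbar
  set E := IntermediateField.adjoin F ({lam} : Set (AlgebraicClosure F)) with hE
  have hint : IsIntegral F lam := (Algebra.IsAlgebraic.isAlgebraic lam).isIntegral
  have hmem : ∀ g : Polynomial F, Polynomial.aeval lam g ∈ E := by
    intro g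
    have hsub : Algebra.adjoin F ({lam} : Set (AlgebraicClosure F)) ≤ E.toSubalgebra :=
      IntermediateField.algebra_adjoin_le_adjoin F _
    apply hsub
    rw [Algebra.adjoin_singleton_eq_range_aeval]
    exact ⟨g, rfl⟩
  set M'' : Matrix (Fin m) (Fin l) E := Matrix.of fun i j =>
    (⟨Polynomial.aeval lam (N i j), hmem (N i j)⟩ : E) with hM
  set φ := algebraMap E (AlgebraicClosure F) with hφ
  have hφval : ∀ x : E, φ x = (x : AlgebraicClosure F) := fun x => rfl
  have hmap : M''.map φ = N.map fun f => Polynomial.aeval lam f := by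
    ext i j
    rw [Matrix.map_apply, Matrix.map_apply]
    rfl
  by_cases hker : ∀ c' : Fin l → E, M'' *ᵥ c' = 0 → c' = 0
  · -- left-inverse argument: the kernel over the closure is trivial as well
    set f := Matrix.toLin' M'' with hf
    have hinj : LinearMap.ker f = ⊥ := by
      rw [LinearMap.ker_eq_bot']
      intro c hcf
      exact hker c (by rw [← Matrix.toLin'_apply M'' c]; exact hcf)
    obtain ⟨g, hg⟩ := LinearMap.exists_leftInverse_of_injective f hinj
    set B := LinearMap.toMatrix' g with hB
    have hBM : B * M'' = 1 := by
      calc B * M'' = LinearMap.toMatrix' g * LinearMap.toMatrix' (Matrix.toLin' M'') := by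
            rw [LinearMap.toMatrix'_toLin']
        _ = LinearMap.toMatrix' (g ∘ₗ Matrix.toLin' M'') := (LinearMap.toMatrix'_comp _ _).symm
        _ = 1 := by rw [hf] at hg; rw [hg, LinearMap.toMatrix'_id]
    have h1 : (B.map φ) * (N.map fun f => Polynomial.aeval lam f) = 1 := by
      rw [← hmap, ← Matrix.map_mul, hBM, Matrix.map_one φ (map_zero φ) (_root_.map_one φ)]
    calc cbar = (1 : Matrix (Fin l) (Fin l) (AlgebraicClosure F)) *ᵥ cbar :=
          (Matrix.one_mulVec cbar).symm
      _ = (B.map φ) *ᵥ ((N.map fun f => Polynomial.aeval lam f) *ᵥ cbar) := by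
          rw [Matrix.mulVec_mulVec, h1]
      _ = 0 := by rw [hcbar, Matrix.mulVec_zero]
  · -- a nonzero kernel vector over E contradicts minimality
    exfalso
    push_neg at hker
    obtain ⟨c', hc'ker, hc'0⟩ := hker
    -- represent entries of c' as polynomials evaluated at lam
    have hrep : ∀ j, ∃ Pj : Polynomial F,
        Polynomial.aeval lam Pj = (c' j : AlgebraicClosure F) := by
      intro j
      have hmem2 : (c' j : AlgebraicClosure F) ∈ Algebra.adjoin F ({lam} : Set _) := by
        rw [← IntermediateField.adjoin_simple_toSubalgebra_of_isAlgebraic hint.isAlgebraic]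
        exact (c' j).2
      rw [Algebra.adjoin_singleton_eq_range_aeval] at hmem2
      obtain ⟨P, hP⟩ := hmem2
      exact ⟨P, hP⟩
    choose P hPlam using hrep
    set μ := minpoly F lam with hμ
    have hμmonic : μ.Monic := minpoly.monic hint
    have hμ0 : μ ≠ 0 := minpoly.ne_zero hint
    have hμdeg : 0 < μ.natDegree := minpoly.natDegree_pos hint
    have hμRF0 : algebraMap (Polynomial F) (RatFunc F) μ ≠ 0 := fun h =>
      hμ0 (algebraMap_polynomial_injective (by rw [h, map_zero]))
    -- μ divides every entry of N *ᵥ P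
    have hdvd : ∀ i, μ ∣ (N *ᵥ P) i := by
      intro i
      apply minpoly.dvd F lam
      have h2 : Polynomial.aeval lam ((N *ᵥ P) i) = φ ((M'' *ᵥ c') i) := by
        rw [aeval_mulVec]
        simp only [Matrix.mulVec, dotProduct, map_sum, _root_.map_mul,
          Matrix.map_apply]
        refine Finset.sum_congr rfl fun j _ => ?_
        rw [hφval, hPlam j]
        rfl
      rw [h2, hc'ker, Pi.zero_apply, map_zero]
    -- reduce P modulo μ
    set p : Fin l → Polynomial F := fun j => P j %ₘ μ with hp
    have hPdecomp : ∀ j, P j = p j + μ * (P j /ₘ μ) := fun j =>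
      (Polynomial.modByMonic_add_div (P j) μ).symm
    have hdvdp : ∀ i, μ ∣ (N *ᵥ p) i := by
      intro i
      have hsplit : (N *ᵥ P) i = (N *ᵥ p) i + μ * (N *ᵥ fun j => P j /ₘ μ) i := by
        simp only [Matrix.mulVec, dotProduct, Finset.mul_sum, ← Finset.sum_add_distrib]
        refine Finset.sum_congr rfl fun j _ => ?_
        conv_lhs => rw [hPdecomp j]
        ring
      have h3 : (N *ᵥ p) i = (N *ᵥ P) i - μ * (N *ᵥ fun j => P j /ₘ μ) i := by
        rw [hsplit]; ring
      rw [h3]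
      exact dvd_sub (hdvd i) (Dvd.intro _ rfl)
    choose q hq using hdvdp
    -- p is nonzero
    obtain ⟨j1, hj1⟩ := Function.ne_iff.mp hc'0
    have hc'j1 : c' j1 ≠ 0 := by simpa using hj1
    have hpj1 : p j1 ≠ 0 := by
      intro h0
      apply hc'j1
      have hdvdP : μ ∣ P j1 := (Polynomial.modByMonic_eq_zero_iff_dvd hμmonic).mp h0
      obtain ⟨t, ht⟩ := hdvdP
      have : (c' j1 : AlgebraicClosure F) = 0 := by
        rw [← hPlam j1, ht, _root_.map_mul, minpoly.aeval, zero_mul]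
      exact Subtype.ext this
    have hpne : p ≠ 0 := fun h => hpj1 (by rw [h]; rfl)
    have hpdeglt : ∀ j, (p j).natDegree ≤ μ.natDegree - 1 := by
      intro j
      by_cases h0 : p j = 0
      · rw [h0, Polynomial.natDegree_zero]; omega
      · have := Polynomial.natDegree_lt_natDegree h0
          (Polynomial.degree_modByMonic_lt (P j) hμmonic)
        omega
    -- pick the column of maximal degree in the support of p
    have hne2 : (Finset.univ.filter fun j => p j ≠ 0).Nonempty :=
      ⟨j1, Finset.mem_filter.mpr ⟨Finset.mem_univ j1, hpj1⟩⟩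
    obtain ⟨j0, hj0mem, hj0max⟩ := Finset.exists_max_image _ (colDegNat N) hne2
    have hpj0 : p j0 ≠ 0 := (Finset.mem_filter.mp hj0mem).2
    have hdmax : ∀ j, p j ≠ 0 → colDegNat N j ≤ colDegNat N j0 := fun j hj =>
      hj0max j (Finset.mem_filter.mpr ⟨Finset.mem_univ j, hj⟩)
    -- rational scalars
    set s : Fin l → RatFunc F := fun j =>
      algebraMap (Polynomial F) (RatFunc F) (p j) / algebraMap (Polynomial F) (RatFunc F) μ
      with hsdef
    have hs0 : s j0 ≠ 0 := by
      rw [hsdef]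
      apply div_ne_zero _ hμRF0
      exact fun h => hpj0 (algebraMap_polynomial_injective (by rw [h, map_zero]))
    have hucol : (fun i => algebraMap (Polynomial F) (RatFunc F) (q i))
        = ∑ j, s j • (fun i' => (toRF N)ᵀ j i') := by
      funext i
      rw [Finset.sum_apply]
      have h1 : ∑ j, (s j • fun i' => (toRF N)ᵀ j i') i
          = (algebraMap (Polynomial F) (RatFunc F) μ)⁻¹ *
            ∑ j, algebraMap (Polynomial F) (RatFunc F) (p j) *
              algebraMap (Polynomial F) (RatFunc F) (N i j) := by
        rw [Finset.mul_sum]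
        refine Finset.sum_congr rfl fun j _ => ?_
        simp only [Pi.smul_apply, smul_eq_mul, hsdef, Matrix.transpose_apply, toRF_apply]
        rw [div_eq_mul_inv]
        ring
      rw [h1, ← algebraMap_mulVec, hq i, _root_.map_mul, inv_mul_cancel_left₀ hμRF0]
    have hcols : (fun k : Fin l => (toRF (N.updateCol j0 q))ᵀ k)
        = Function.update (fun j : Fin l => (toRF N)ᵀ j) j0 (∑ j, s j • (toRF N)ᵀ j) := by
      rw [cols_updateColumn]
      congr 1
    have hliNew : LinearIndependent (RatFunc F)
        (fun k : Fin l => (toRF (N.updateCol j0 q))ᵀ k) := by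
      rw [hcols]; exact li_update hli s j0 hs0
    have hspanNew : spanCols (N.updateCol j0 q) = spanCols N := by
      unfold spanCols
      rw [show (fun k : Fin l => (toRF (N.updateCol j0 q))ᵀ k)
          = Function.update (fun j : Fin l => (toRF N)ᵀ j) j0 (∑ j, s j • (toRF N)ᵀ j)
          from hcols]
      exact span_update _ s j0 hs0
    -- degree bound
    have hDm : ∀ i, ((N *ᵥ p) i).natDegree ≤ (μ.natDegree - 1) + colDegNat N j0 :=
      natDegree_mulVec_le N p _ (fun j hj => by
        have h1 := hpdeglt j
        have h2 := hdmax j hj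
        omega)
    by_cases hq0 : ∀ i, q i = 0
    · -- then N *ᵥ p = 0, contradicting linear independence
      have : N *ᵥ p = 0 := by
        funext i
        rw [hq i, hq0 i, mul_zero]
        rfl
      exact hpne ((li_iff_poly N).mp hli p this)
    · push_neg at hq0
      obtain ⟨i0, hi0⟩ := hq0
      have hkey : ∀ i, q i ≠ 0 →
          μ.natDegree + (q i).natDegree ≤ (μ.natDegree - 1) + colDegNat N j0 := by
        intro i hqi
        have h1 : ((N *ᵥ p) i).natDegree = μ.natDegree + (q i).natDegree := by
          rw [hq i, Polynomial.natDegree_mul hμ0 hqi]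
        have h2 := hDm i
        omega
      have hd0pos : 0 < colDegNat N j0 := by
        have := hkey i0 hi0
        omega
      have hult : ∀ i, (q i).natDegree < colDegNat N j0 := by
        intro i
        by_cases hqi : q i = 0
        · rw [hqi, Polynomial.natDegree_zero]; omega
        · have := hkey i hqi
          omega
      have hlt := matOrder_update_lt N j0 q hd0pos hult
      have hge := hmin3 l (N.updateCol j0 q) hliNew hspanNew
      omega

/-- **Forney's criterion.** The columns of a polynomial matrix `N` form a
minimal basis of the subspace they span if and only if `N(λ₀)` has full column rank for every
`λ₀` in the algebraic closure of `F` and `N` is column reduced. -/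
theorem isMinimalBasis_iff_fullRank_and_columnReduced
    {m l : ℕ} (N : Matrix (Fin m) (Fin l) (Polynomial F)) :
    IsMinimalBasisOf (spanCols N) N ↔
      ((∀ lam : AlgebraicClosure F, (N.map fun f => Polynomial.aeval lam f).rank = l) ∧
        (highestColCoeff N).rank = l) := by
  have hCiff : ∀ lam : AlgebraicClosure F,
      ((N.map fun f => Polynomial.aeval lam f).rank = l ↔
        ∀ c : Fin l → AlgebraicClosure F,
          (N.map fun f => Polynomial.aeval lam f) *ᵥ c = 0 → c = 0) :=
    fun lam => by rw [rank_eq_iff_li, li_cols_iff_mulVec]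
  have hDiff : ((highestColCoeff N).rank = l ↔
      ∀ c : Fin l → F, highestColCoeff N *ᵥ c = 0 → c = 0) := by
    rw [rank_eq_iff_li, li_cols_iff_mulVec]
  constructor
  · rintro ⟨hli, -, hmin3⟩
    exact ⟨fun lam => (hCiff lam).mpr (C_of_min hli hmin3 lam), hDiff.mpr (D_of_min hli hmin3)⟩
  · rintro ⟨hC, hD⟩
    have hC' := fun lam => (hCiff lam).mp (hC lam)
    have hD' := hDiff.mp hD
    exact ⟨li_of_colReduced hD', rfl, minimality_of_C_D hC' hD'⟩

end
end

section
/- Let D(λ) = D_qλ^q + ⋯ + D_1λ + D_0 ∈ F[λ]^{p×p} and let M(λ) = M_1λ + M_0 ∈ F[λ]^{(η+1)p×(ε+1)p} be partitioned into (η+1)×(ε+1) blocks of size p×p, with q = ε + η + 1. Then (Λ_η(λ)⊗I_p)·M(λ)·(Λ_ε(λ)^T⊗I_p) = D(λ) if and only if for each k = 0,1,…,q: Σ_{i+j = q+2-k}[M_1]_{ij} + Σ_{i+j = q+1-k}[M_0]_{ij} = D_k (the antidiagonal sum condition). In particular, [M_0]_{η+1, ε+1} = D_0. -/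
open Polynomial Matrix Kronecker

noncomputable section

variable {F : Type*} [Field F]

/-- A linear pencil built from two constant matrices: `λ M₁ + M₀`. -/
def pencilMat {a b : Type*} (M₁ M₀ : Matrix a b F) : Matrix a b (Polynomial F) :=
  Matrix.of fun i j => Polynomial.C (M₁ i j) * Polynomial.X + Polynomial.C (M₀ i j)

/-- The row vector `Λ_k(λ) = [λ^k, λ^{k-1}, …, λ, 1]`. -/
def Lamk (F : Type*) [Field F] (k : ℕ) : Matrix (Fin 1) (Fin (k + 1)) (Polynomial F) :=
  Matrix.of fun _ j => Polynomial.X ^ (k - (j : ℕ))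

/-- The `(i,j)` block of size `p × p` of a block-partitioned matrix. -/
def blockOf {a b p : ℕ} (M : Matrix (Fin a × Fin p) (Fin b × Fin p) F)
    (i : Fin a) (j : Fin b) : Matrix (Fin p) (Fin p) F :=
  Matrix.of fun x y => M (i, x) (j, y)


lemma single_sum {R : Type*} [Semiring R] (c : Polynomial R) (q m : ℕ) (hm : m ≤ q) :
    ∑ k : Fin (q+1), (if m + (k:ℕ) = q then c else 0) * Polynomial.X ^ (k:ℕ)
      = c * Polynomial.X ^ (q - m) := by
  rw [Finset.sum_eq_single (⟨q - m, by omega⟩ : Fin (q+1))]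
  · rw [if_pos (by simp; omega)]
  · intro k _ hk
    rw [if_neg, zero_mul]
    intro hc; exact hk (Fin.ext (by simp; omega))
  · simp

lemma coeff_eq {q : ℕ} (f g : Fin (q+1) → F)
    (h : ∑ k : Fin (q+1), Polynomial.C (f k) * Polynomial.X ^ (k:ℕ)
       = ∑ k : Fin (q+1), Polynomial.C (g k) * Polynomial.X ^ (k:ℕ)) :
    ∀ k, f k = g k := by
  intro k
  have h2 := congrArg (fun P => Polynomial.coeff P (k:ℕ)) h
  simpa [Polynomial.finset_sum_coeff, Polynomial.coeff_C_mul, Polynomial.coeff_X_pow,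
    mul_ite, Fin.val_eq_val, Finset.sum_ite_eq'] using h2

lemma entry_expand {p ε η : ℕ}
    (M₁ M₀ : Matrix (Fin (η + 1) × Fin p) (Fin (ε + 1) × Fin p) F) (a b : Fin p) :
    ((Lamk F η ⊗ₖ (1 : Matrix (Fin p) (Fin p) (Polynomial F))) * pencilMat M₁ M₀ *
          (Lamk F ε ⊗ₖ (1 : Matrix (Fin p) (Fin p) (Polynomial F)))ᵀ)
            ((0 : Fin 1), a) ((0 : Fin 1), b) =
      ∑ i : Fin (η+1), ∑ j : Fin (ε+1),
        (Polynomial.C (M₁ (i,a) (j,b)) * Polynomial.X ^ (η - (i:ℕ) + (ε - (j:ℕ)) + 1)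
         + Polynomial.C (M₀ (i,a) (j,b)) * Polynomial.X ^ (η - (i:ℕ) + (ε - (j:ℕ)))) := by
  simp [Matrix.mul_apply, Matrix.transpose_apply, Matrix.kroneckerMap_apply, Matrix.one_apply,
    Lamk, pencilMat, Fintype.sum_prod_type, mul_ite, ite_mul, Finset.sum_ite_eq, Finset.sum_ite_eq',
    Finset.mul_sum, Finset.sum_mul, mul_add, add_mul]
  rw [Finset.sum_comm]
  refine Finset.sum_congr rfl fun i _ => Finset.sum_congr rfl fun j _ => ?_
  simp [Finset.sum_add_distrib, Finset.sum_ite_eq', pow_add, pow_succ]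
  ring

lemma key {p ε η q : ℕ} (hq : q = ε + η + 1)
    (M₁ M₀ : Matrix (Fin (η + 1) × Fin p) (Fin (ε + 1) × Fin p) F) (a b : Fin p) :
    ((Lamk F η ⊗ₖ (1 : Matrix (Fin p) (Fin p) (Polynomial F))) * pencilMat M₁ M₀ *
          (Lamk F ε ⊗ₖ (1 : Matrix (Fin p) (Fin p) (Polynomial F)))ᵀ)
            ((0 : Fin 1), a) ((0 : Fin 1), b) =
      ∑ k : Fin (q + 1), Polynomial.C
        ((∑ i : Fin (η+1), ∑ j : Fin (ε+1),
            if (i:ℕ)+(j:ℕ)+(k:ℕ) = q then M₁ (i,a) (j,b) else 0)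
          + (∑ i : Fin (η+1), ∑ j : Fin (ε+1),
            if (i:ℕ)+(j:ℕ)+(k:ℕ)+1 = q then M₀ (i,a) (j,b) else 0)) * Polynomial.X ^ (k:ℕ) := by
  rw [entry_expand]
  have expand : ∀ (i : Fin (η+1)) (j : Fin (ε+1)),
      Polynomial.C (M₁ (i,a) (j,b)) * Polynomial.X ^ (η - (i:ℕ) + (ε - (j:ℕ)) + 1)
      + Polynomial.C (M₀ (i,a) (j,b)) * Polynomial.X ^ (η - (i:ℕ) + (ε - (j:ℕ)))
      = ∑ k : Fin (q+1),
          ((if (i:ℕ)+(j:ℕ)+(k:ℕ) = q then Polynomial.C (M₁ (i,a) (j,b)) else 0)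
           + (if (i:ℕ)+(j:ℕ)+(k:ℕ)+1 = q then Polynomial.C (M₀ (i,a) (j,b)) else 0))
          * Polynomial.X ^ (k:ℕ) := by
    intro i j
    have hi : (i:ℕ) ≤ η := by omega
    have hj : (j:ℕ) ≤ ε := by omega
    simp only [add_mul, Finset.sum_add_distrib]
    congr 1
    · rw [single_sum _ q ((i:ℕ)+(j:ℕ)) (by omega),
        show q - ((i:ℕ)+(j:ℕ)) = η - (i:ℕ) + (ε - (j:ℕ)) + 1 by omega]
    · rw [show (∑ k : Fin (q+1),
          (if (i:ℕ)+(j:ℕ)+(k:ℕ)+1 = q then Polynomial.C (M₀ (i,a) (j,b)) else 0)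
            * Polynomial.X ^ (k:ℕ))
        = ∑ k : Fin (q+1),
          (if ((i:ℕ)+(j:ℕ)+1) + (k:ℕ) = q then Polynomial.C (M₀ (i,a) (j,b)) else 0)
            * Polynomial.X ^ (k:ℕ) from
        Finset.sum_congr rfl fun k _ => by
          rw [if_congr (show (i:ℕ)+(j:ℕ)+(k:ℕ)+1 = q ↔ ((i:ℕ)+(j:ℕ)+1)+(k:ℕ) = q by omega) rfl rfl]]
      rw [single_sum _ q ((i:ℕ)+(j:ℕ)+1) (by omega),
        show q - ((i:ℕ)+(j:ℕ)+1) = η - (i:ℕ) + (ε - (j:ℕ)) by omega]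
  simp only [expand]
  calc (∑ i : Fin (η+1), ∑ j : Fin (ε+1), ∑ k : Fin (q+1),
          ((if (i:ℕ)+(j:ℕ)+(k:ℕ) = q then Polynomial.C (M₁ (i,a) (j,b)) else 0)
           + (if (i:ℕ)+(j:ℕ)+(k:ℕ)+1 = q then Polynomial.C (M₀ (i,a) (j,b)) else 0))
          * Polynomial.X ^ (k:ℕ))
      = ∑ i : Fin (η+1), ∑ k : Fin (q+1), ∑ j : Fin (ε+1),
          ((if (i:ℕ)+(j:ℕ)+(k:ℕ) = q then Polynomial.C (M₁ (i,a) (j,b)) else 0)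
           + (if (i:ℕ)+(j:ℕ)+(k:ℕ)+1 = q then Polynomial.C (M₀ (i,a) (j,b)) else 0))
          * Polynomial.X ^ (k:ℕ) := Finset.sum_congr rfl fun i _ => Finset.sum_comm
    _ = ∑ k : Fin (q+1), ∑ i : Fin (η+1), ∑ j : Fin (ε+1),
          ((if (i:ℕ)+(j:ℕ)+(k:ℕ) = q then Polynomial.C (M₁ (i,a) (j,b)) else 0)
           + (if (i:ℕ)+(j:ℕ)+(k:ℕ)+1 = q then Polynomial.C (M₀ (i,a) (j,b)) else 0))
          * Polynomial.X ^ (k:ℕ) := Finset.sum_comm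
    _ = _ := by
        refine Finset.sum_congr rfl fun k _ => ?_
        simp only [← Finset.sum_mul, Finset.sum_add_distrib, map_add, map_sum,
          apply_ite Polynomial.C, map_zero]


/-- **antidiagonal sum condition.** For a polynomial matrix
`D(λ) = Σ_{k=0}^{q} D_k λ^k` with `q = ε + η + 1` and a block pencil `M(λ) = M₁λ + M₀`
partitioned into `(η+1) × (ε+1)` blocks of size `p × p`, one has
`(Λ_η(λ) ⊗ I_p) M(λ) (Λ_ε(λ)ᵀ ⊗ I_p) = D(λ)` if and only if, for every `k = 0, …, q`,
`Σ_{i+j = q+2-k} [M₁]_{ij} + Σ_{i+j = q+1-k} [M₀]_{ij} = D_k` (indices `1`-based).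
In particular, `[M₀]_{η+1, ε+1} = D₀`. -/
theorem antidiagonal_sum_condition
    {p ε η q : ℕ} (hq : q = ε + η + 1)
    (Dco : Fin (q + 1) → Matrix (Fin p) (Fin p) F)
    (M₁ M₀ : Matrix (Fin (η + 1) × Fin p) (Fin (ε + 1) × Fin p) F) :
    (((∀ a b : Fin p,
        ((Lamk F η ⊗ₖ (1 : Matrix (Fin p) (Fin p) (Polynomial F))) * pencilMat M₁ M₀ *
          (Lamk F ε ⊗ₖ (1 : Matrix (Fin p) (Fin p) (Polynomial F)))ᵀ)
            ((0 : Fin 1), a) ((0 : Fin 1), b) =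
          ∑ k : Fin (q + 1), Polynomial.C (Dco k a b) * Polynomial.X ^ (k : ℕ)) ↔
      (∀ k : Fin (q + 1),
        (∑ i : Fin (η + 1), ∑ j : Fin (ε + 1),
          if (i : ℕ) + (j : ℕ) + (k : ℕ) = q then blockOf M₁ i j else 0) +
        (∑ i : Fin (η + 1), ∑ j : Fin (ε + 1),
          if (i : ℕ) + (j : ℕ) + (k : ℕ) + 1 = q then blockOf M₀ i j else 0) = Dco k)) ∧
    ((∀ a b : Fin p,
        ((Lamk F η ⊗ₖ (1 : Matrix (Fin p) (Fin p) (Polynomial F))) * pencilMat M₁ M₀ *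
          (Lamk F ε ⊗ₖ (1 : Matrix (Fin p) (Fin p) (Polynomial F)))ᵀ)
            ((0 : Fin 1), a) ((0 : Fin 1), b) =
          ∑ k : Fin (q + 1), Polynomial.C (Dco k a b) * Polynomial.X ^ (k : ℕ)) →
      blockOf M₀ ⟨η, Nat.lt_succ_self η⟩ ⟨ε, Nat.lt_succ_self ε⟩ =
        Dco ⟨0, Nat.succ_pos q⟩)) := by
  have fwd : (∀ a b : Fin p,
        ((Lamk F η ⊗ₖ (1 : Matrix (Fin p) (Fin p) (Polynomial F))) * pencilMat M₁ M₀ *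
          (Lamk F ε ⊗ₖ (1 : Matrix (Fin p) (Fin p) (Polynomial F)))ᵀ)
            ((0 : Fin 1), a) ((0 : Fin 1), b) =
          ∑ k : Fin (q + 1), Polynomial.C (Dco k a b) * Polynomial.X ^ (k : ℕ)) →
      ∀ k : Fin (q + 1),
        (∑ i : Fin (η + 1), ∑ j : Fin (ε + 1),
          if (i : ℕ) + (j : ℕ) + (k : ℕ) = q then blockOf M₁ i j else 0) +
        (∑ i : Fin (η + 1), ∑ j : Fin (ε + 1),
          if (i : ℕ) + (j : ℕ) + (k : ℕ) + 1 = q then blockOf M₀ i j else 0) = Dco k := by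
    intro h k
    ext a b
    have hp := h a b
    rw [key hq] at hp
    have h2 := coeff_eq _ _ hp k
    simpa [Matrix.sum_apply, Matrix.add_apply, blockOf,
      apply_ite (fun M : Matrix (Fin p) (Fin p) F => M a b)] using h2
  refine ⟨⟨fwd, ?_⟩, fun h => ?_⟩
  · intro h a b
    rw [key hq]
    refine Finset.sum_congr rfl fun k _ => ?_
    have h2 := congrArg (fun M : Matrix (Fin p) (Fin p) F => M a b) (h k)
    simp only [Matrix.sum_apply, Matrix.add_apply, blockOf,
      apply_ite (fun M : Matrix (Fin p) (Fin p) F => M a b), Matrix.zero_apply,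
      Matrix.of_apply] at h2
    rw [h2]
  · have h0 := fwd h ⟨0, Nat.succ_pos q⟩
    rw [← h0]
    have hz : (∑ i : Fin (η + 1), ∑ j : Fin (ε + 1),
        if (i : ℕ) + (j : ℕ) + ((⟨0, Nat.succ_pos q⟩ : Fin (q+1)) : ℕ) = q
        then blockOf M₁ i j else 0) = 0 :=
      Finset.sum_eq_zero fun i _ => Finset.sum_eq_zero fun j _ => by
        rw [if_neg]
        have e0 : ((⟨0, Nat.succ_pos q⟩ : Fin (q+1)) : ℕ) = 0 := rfl
        have := i.isLt; have := j.isLt; omega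
    have h1 : (∑ i : Fin (η + 1), ∑ j : Fin (ε + 1),
        if (i : ℕ) + (j : ℕ) + ((⟨0, Nat.succ_pos q⟩ : Fin (q+1)) : ℕ) + 1 = q
        then blockOf M₀ i j else 0)
        = blockOf M₀ ⟨η, Nat.lt_succ_self η⟩ ⟨ε, Nat.lt_succ_self ε⟩ := by
      rw [Finset.sum_eq_single (⟨η, Nat.lt_succ_self η⟩ : Fin (η + 1))]
      · rw [Finset.sum_eq_single (⟨ε, Nat.lt_succ_self ε⟩ : Fin (ε + 1))]
        · rw [if_pos (by have e0 : ((⟨0, Nat.succ_pos q⟩ : Fin (q+1)) : ℕ) = 0 := rfl; simp; omega)]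
        · intro j _ hj
          rw [if_neg]
          have hje : (j : ℕ) ≠ ε := fun hc => hj (Fin.ext (by simpa using hc))
          have e0 : ((⟨0, Nat.succ_pos q⟩ : Fin (q+1)) : ℕ) = 0 := rfl
          have := j.isLt; omega
        · intro hc; exact absurd (Finset.mem_univ _) hc
      · intro i _ hi
        refine Finset.sum_eq_zero fun j _ => ?_
        rw [if_neg]
        have hie : (i : ℕ) ≠ η := fun hc => hi (Fin.ext (by simpa using hc))
        have e0 : ((⟨0, Nat.succ_pos q⟩ : Fin (q+1)) : ℕ) = 0 := rfl
        have := j.isLt; omega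
      · intro hc; exact absurd (Finset.mem_univ _) hc
    rw [hz, h1, zero_add]


end
end
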